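/- arXiv:1812.00597 — 2 statements merged into one kernel-verified Lean document; each statement's English description precedes it below -/
import Mathlib

section
/- Let Γ : [0,1] → c(X*) be weak* scalarly integrable. Then Γ is Gelfand integrable in cw*k(X*): for every A ∈ 𝓛 there exists M(A) ∈ cw*k(X*) such that s(x, M(A)) = ∫_A s(x, Γ(t)) dλ(t) for every x ∈ X. -/
open MeasureTheory Set

noncomputable section

/-- Lebesgue measure restricted to the unit interval `[0,1]`. -/
def μ01 : Measure ℝ := volume.restrict (Icc (0:ℝ) 1)

/-- The support function `s(x, C) = sup {x*(x) : x* ∈ C}` of a set of functionals,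
evaluated at a point `x` of the predual. -/
def suppFD {X : Type*} [NormedAddCommGroup X] [NormedSpace ℝ X]
    (x : X) (C : Set (StrongDual ℝ X)) : ℝ :=
  sSup ((fun x' : StrongDual ℝ X => x' x) '' C)

section helpers

variable {X : Type*} [NormedAddCommGroup X] [NormedSpace ℝ X]
  {C : Set (StrongDual ℝ X)} {x y : X} {b : ℝ}

lemma suppFD_le (hC : C.Nonempty) (h : ∀ x' ∈ C, x' x ≤ b) : suppFD x C ≤ b :=
  csSup_le (hC.image _) (by rintro _ ⟨x', hx', rfl⟩; exact h x' hx')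

lemma le_suppFD (hb : BddAbove ((fun x' : StrongDual ℝ X => x' x) '' C))
    {x' : StrongDual ℝ X} (h : x' ∈ C) : x' x ≤ suppFD x C :=
  le_csSup hb ⟨x', h, rfl⟩

lemma suppFD_zero (hC : C.Nonempty) : suppFD (0 : X) C = 0 := by
  have : (fun x' : StrongDual ℝ X => x' (0:X)) '' C = {0} := by
    ext r
    simp only [mem_image, mem_singleton_iff, map_zero]
    exact ⟨fun ⟨x', _, h⟩ => h.symm, fun h => ⟨hC.some, hC.some_mem, h.symm⟩⟩
  rw [suppFD, this, csSup_singleton]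

lemma bddAbove_suppFD_add
    (hx : BddAbove ((fun x' : StrongDual ℝ X => x' x) '' C))
    (hy : BddAbove ((fun x' : StrongDual ℝ X => x' y) '' C)) :
    BddAbove ((fun x' : StrongDual ℝ X => x' (x + y)) '' C) := by
  obtain ⟨bx, hbx⟩ := hx; obtain ⟨by', hby⟩ := hy
  refine ⟨bx + by', ?_⟩
  rintro _ ⟨x', hx', rfl⟩
  have h1 : x' x ≤ bx := hbx ⟨x', hx', rfl⟩
  have h2 : x' y ≤ by' := hby ⟨x', hx', rfl⟩
  simp only [map_add]
  linarith

lemma bddAbove_suppFD_smul {c : ℝ} (hc : 0 ≤ c)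
    (hx : BddAbove ((fun x' : StrongDual ℝ X => x' x) '' C)) :
    BddAbove ((fun x' : StrongDual ℝ X => x' (c • x)) '' C) := by
  obtain ⟨bx, hbx⟩ := hx
  refine ⟨c * bx, ?_⟩
  rintro _ ⟨x', hx', rfl⟩
  have h1 : x' x ≤ bx := hbx ⟨x', hx', rfl⟩
  simp only [_root_.map_smul, smul_eq_mul]
  exact mul_le_mul_of_nonneg_left h1 hc

lemma suppFD_add_le (hC : C.Nonempty)
    (hx : BddAbove ((fun x' : StrongDual ℝ X => x' x) '' C))
    (hy : BddAbove ((fun x' : StrongDual ℝ X => x' y) '' C)) :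
    suppFD (x + y) C ≤ suppFD x C + suppFD y C := by
  refine suppFD_le hC fun x' hx' => ?_
  have h1 := le_suppFD hx hx'
  have h2 := le_suppFD hy hx'
  simp only [map_add]
  linarith

lemma suppFD_smul (hC : C.Nonempty) {c : ℝ} (hc : 0 ≤ c)
    (hx : BddAbove ((fun x' : StrongDual ℝ X => x' x) '' C)) :
    suppFD (c • x) C = c * suppFD x C := by
  rcases eq_or_lt_of_le hc with rfl | hc'
  · simp only [zero_smul, zero_mul]; exact suppFD_zero hC
  · refine le_antisymm (suppFD_le hC fun x' hx' => ?_) ?_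
    · have h1 := le_suppFD hx hx'
      simp only [_root_.map_smul, smul_eq_mul]
      exact mul_le_mul_of_nonneg_left h1 hc
    · have h2 : suppFD x C ≤ c⁻¹ * suppFD (c • x) C := by
        refine suppFD_le hC fun x' hx' => ?_
        have h3 := le_suppFD (bddAbove_suppFD_smul hc hx) hx'
        simp only [_root_.map_smul, smul_eq_mul] at h3
        rw [le_inv_mul_iff₀ hc']
        exact h3
      calc c * suppFD x C ≤ c * (c⁻¹ * suppFD (c • x) C) :=
            mul_le_mul_of_nonneg_left h2 hc
        _ = suppFD (c • x) C := by field_simp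

lemma suppFD_pair_nonneg (hC : C.Nonempty)
    (hx : BddAbove ((fun x' : StrongDual ℝ X => x' x) '' C))
    (hnx : BddAbove ((fun x' : StrongDual ℝ X => x' (-x)) '' C)) :
    0 ≤ suppFD x C + suppFD (-x) C := by
  obtain ⟨x', hx'⟩ := hC
  have h1 := le_suppFD hx hx'
  have h2 := le_suppFD hnx hx'
  simp only [map_neg] at h2
  linarith

end helpers

/-- Every weak* scalarly integrable multifunction
`Γ : [0,1] → c(X*)` is Gelfand integrable in `cw*k(X*)`: for every Lebesgue measurable
`A ⊆ [0,1]` there is a nonempty convex weak*-compact set `M ⊆ X*` with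
`s(x, M) = ∫_A s(x, Γ(t)) dλ(t)` for every `x ∈ X`. -/
theorem gelfand_integrable_of_weakStar_scalarly_integrable
    {X : Type*} [NormedAddCommGroup X] [NormedSpace ℝ X] [CompleteSpace X]
    (Γ : ℝ → Set (StrongDual ℝ X))
    (hΓ : ∀ t ∈ Icc (0:ℝ) 1, (Γ t).Nonempty ∧ IsClosed (Γ t) ∧ Convex ℝ (Γ t))
    (hscal : ∀ x : X,
      (∀ᵐ t ∂μ01, BddAbove ((fun x' : StrongDual ℝ X => x' x) '' Γ t)) ∧
      Integrable (fun t => suppFD x (Γ t)) μ01) :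
    ∀ A : Set ℝ, A ⊆ Icc (0:ℝ) 1 → MeasurableSet A →
      ∃ M : Set (StrongDual ℝ X), M.Nonempty ∧ Convex ℝ M ∧
        IsCompact (StrongDual.toWeakDual '' M) ∧
        ∀ x : X, suppFD x M = ∫ t in A, suppFD x (Γ t) := by
  intro A hA hAm
  -- basic a.e. facts
  have hne : ∀ᵐ t ∂μ01, (Γ t).Nonempty :=
    (ae_restrict_mem measurableSet_Icc).mono fun t ht => (hΓ t ht).1
  have hBdd : ∀ x : X, ∀ᵐ t ∂μ01,
      BddAbove ((fun x' : StrongDual ℝ X => x' x) '' Γ t) := fun x => (hscal x).1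
  have hInt : ∀ x : X, Integrable (fun t => suppFD x (Γ t)) μ01 := fun x => (hscal x).2
  -- the measures agree
  have hμA : volume.restrict A = μ01.restrict A := by
    rw [μ01, Measure.restrict_restrict hAm, inter_eq_self_of_subset_left hA]
  -- the dominating function
  set Mx : X → ℝ → ℝ := fun x t => max (suppFD x (Γ t)) (suppFD (-x) (Γ t)) with hMx
  have hMxInt : ∀ x : X, Integrable (Mx x) μ01 := by
    intro x
    have h1 := hInt x
    have h2 := hInt (-x)
    refine Integrable.mono' (h1.norm.add h2.norm)
      (h1.aestronglyMeasurable.sup h2.aestronglyMeasurable) ?_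
    filter_upwards with t
    simp only [Real.norm_eq_abs, Pi.add_apply]
    calc |Mx x t| ≤ max |suppFD x (Γ t)| |suppFD (-x) (Γ t)| := abs_max_le_max_abs_abs
      _ ≤ |suppFD x (Γ t)| + |suppFD (-x) (Γ t)| :=
          max_le (le_add_of_nonneg_right (abs_nonneg _))
            (le_add_of_nonneg_left (abs_nonneg _))
  have hMxnn : ∀ x : X, 0 ≤ᵐ[μ01] Mx x := by
    intro x
    filter_upwards [hne, hBdd x, hBdd (-x)] with t h1 h2 h3
    have := suppFD_pair_nonneg h1 h2 h3
    simp only [Mx, Pi.zero_apply, le_max_iff]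
    by_contra hcon
    push_neg at hcon
    obtain ⟨hc1, hc2⟩ := hcon
    linarith
  set R : X → ℝ := fun x => ∫ t, Mx x t ∂μ01 with hR
  -- R is a seminorm
  have hRadd : ∀ x y : X, R (x + y) ≤ R x + R y := by
    intro x y
    have hle : Mx (x + y) ≤ᵐ[μ01] fun t => Mx x t + Mx y t := by
      filter_upwards [hne, hBdd x, hBdd y, hBdd (-x), hBdd (-y)] with t h1 h2 h3 h4 h5
      have ha := suppFD_add_le (x := x) (y := y) h1 h2 h3
      have hb := suppFD_add_le (x := -x) (y := -y) h1 h4 h5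
      simp only [Mx]
      rw [max_le_iff]
      constructor
      · exact ha.trans (add_le_add (le_max_left _ _) (le_max_left _ _))
      · rw [neg_add]
        exact hb.trans (add_le_add (le_max_right _ _) (le_max_right _ _))
    calc R (x + y) ≤ ∫ t, (Mx x t + Mx y t) ∂μ01 :=
          integral_mono_ae (hMxInt _) ((hMxInt x).add (hMxInt y)) hle
      _ = R x + R y := integral_add (hMxInt x) (hMxInt y)
  have hRsmul : ∀ (a : ℝ) (x : X), R (a • x) = ‖a‖ * R x := by
    have key : ∀ (c : ℝ), 0 ≤ c → ∀ x : X, R (c • x) = c * R x := by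
      intro c hc x
      have hle : Mx (c • x) =ᵐ[μ01] fun t => c * Mx x t := by
        filter_upwards [hne, hBdd x, hBdd (-x)] with t h1 h2 h3
        have ha := suppFD_smul (x := x) h1 hc h2
        have hb := suppFD_smul (x := -x) h1 hc h3
        simp only [Mx]
        rw [show -(c • x) = c • (-x) by rw [smul_neg], ha, hb,
          mul_max_of_nonneg _ _ hc]
      rw [hR]
      calc (∫ t, Mx (c • x) t ∂μ01) = ∫ t, c * Mx x t ∂μ01 := integral_congr_ae hle
        _ = c * ∫ t, Mx x t ∂μ01 := integral_const_mul _ _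
    intro a x
    rcases le_or_gt 0 a with ha | ha
    · rw [Real.norm_eq_abs, abs_of_nonneg ha]; exact key a ha x
    · have h1 : a • x = (-a) • (-x) := by rw [neg_smul, smul_neg, neg_neg]
      have h2 : R (-x) = R x := by
        apply integral_congr_ae
        filter_upwards with t
        simp only [Mx, neg_neg, max_comm]
      rw [Real.norm_eq_abs, abs_of_neg ha, h1, key (-a) (by linarith) (-x), h2]
  -- R is lower semicontinuous
  have hRlsc : LowerSemicontinuous R := by
    intro x y hy
    by_contra hcon
    rw [Filter.not_eventually] at hcon
    have hfreq : ∃ᶠ z in nhds x, R z ≤ y := hcon.mono fun z hz => not_lt.mp hz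
    -- extract a sequence
    have hseq : ∀ n : ℕ, ∃ z : X, dist z x < 1 / (n + 1) ∧ R z ≤ y := by
      intro n
      have hball : Metric.ball x (1 / (n + 1)) ∈ nhds x :=
        Metric.ball_mem_nhds x (by positivity)
      obtain ⟨z, hz1, hz2⟩ := Filter.frequently_iff.mp hfreq hball
      exact ⟨z, Metric.mem_ball.mp hz1, hz2⟩
    choose u hu1 hu2 using hseq
    have hulim : Filter.Tendsto u Filter.atTop (nhds x) := by
      rw [tendsto_iff_dist_tendsto_zero]
      refine squeeze_zero (fun n => dist_nonneg) (fun n => (hu1 n).le) ?_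
      exact tendsto_one_div_add_atTop_nhds_zero_nat
    -- y ≥ 0
    have hy0 : 0 ≤ y := le_trans (integral_nonneg_of_ae (hMxnn (u 0))) (hu2 0)
    -- Fatou argument
    have claim1 : ∀ᵐ t ∂μ01, ENNReal.ofReal (Mx x t) ≤
        Filter.liminf (fun n => ENNReal.ofReal (Mx (u n) t)) Filter.atTop := by
      filter_upwards [hne, hBdd x, hBdd (-x), ae_all_iff.2 fun n => hBdd (u n),
        ae_all_iff.2 fun n => hBdd (-(u n))] with t h1 h2 h3 h4 h5
      set l := Filter.liminf (fun n => ENNReal.ofReal (Mx (u n) t)) Filter.atTop with hl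
      rcases eq_or_ne l ⊤ with htop | htop
      · rw [htop]; exact le_top
      set L := l.toReal with hL
      have hL0 : 0 ≤ L := ENNReal.toReal_nonneg
      have stepA : ∀ x' ∈ Γ t, |x' x| ≤ L := by
        intro x' hx'
        have hn : ∀ n, ENNReal.ofReal |x' (u n)| ≤ ENNReal.ofReal (Mx (u n) t) := by
          intro n
          refine ENNReal.ofReal_le_ofReal (abs_le.2 ⟨?_, ?_⟩)
          · have := le_suppFD (h5 n) hx'
            simp only [_root_.map_neg] at this
            have h6 : -(x' (u n)) ≤ suppFD (-(u n)) (Γ t) := by linarith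
            linarith [h6.trans (le_max_right (suppFD (u n) (Γ t)) _)]
          · exact (le_suppFD (h4 n) hx').trans (le_max_left _ _)
        have htend : Filter.Tendsto (fun n => ENNReal.ofReal |x' (u n)|)
            Filter.atTop (nhds (ENNReal.ofReal |x' x|)) := by
          refine (ENNReal.continuous_ofReal.tendsto _).comp ?_
          exact (continuous_abs.tendsto _).comp ((x'.continuous.tendsto x).comp hulim)
        have h7 : ENNReal.ofReal |x' x| ≤ l := by
          rw [← htend.liminf_eq]
          exact Filter.liminf_le_liminf (Filter.Eventually.of_forall hn)
        rw [← ENNReal.ofReal_toReal htop] at h7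
        exact (ENNReal.ofReal_le_ofReal_iff hL0).mp h7
      have stepB : Mx x t ≤ L := by
        rw [max_le_iff]
        constructor
        · exact suppFD_le h1 fun x' hx' => (le_abs_self _).trans (stepA x' hx')
        · refine suppFD_le h1 fun x' hx' => ?_
          have := stepA x' hx'
          simp only [_root_.map_neg]
          rw [abs_le] at this
          linarith [this.1]
      calc ENNReal.ofReal (Mx x t) ≤ ENNReal.ofReal L := ENNReal.ofReal_le_ofReal stepB
        _ = l := ENNReal.ofReal_toReal htop
    have claim2 : ∀ n, (∫⁻ t, ENNReal.ofReal (Mx (u n) t) ∂μ01) ≤ ENNReal.ofReal y := by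
      intro n
      have hrepr := integral_eq_lintegral_of_nonneg_ae (hMxnn (u n))
        (hMxInt (u n)).aestronglyMeasurable
      have hfin : (∫⁻ t, ENNReal.ofReal (Mx (u n) t) ∂μ01) ≠ ⊤ :=
        ((hasFiniteIntegral_iff_ofReal (hMxnn (u n))).mp (hMxInt (u n)).2).ne
      have h9 : (∫⁻ t, ENNReal.ofReal (Mx (u n) t) ∂μ01)
          = ENNReal.ofReal (R (u n)) := by
        simp only [hR]
        rw [hrepr]
        exact (ENNReal.ofReal_toReal hfin).symm
      rw [h9]
      exact ENNReal.ofReal_le_ofReal (hu2 n)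
    have hfinal : R x ≤ y := by
      have hx1 : R x = (∫⁻ t, ENNReal.ofReal (Mx x t) ∂μ01).toReal :=
        integral_eq_lintegral_of_nonneg_ae (hMxnn x) (hMxInt x).aestronglyMeasurable
      have hchain : (∫⁻ t, ENNReal.ofReal (Mx x t) ∂μ01) ≤ ENNReal.ofReal y := by
        calc (∫⁻ t, ENNReal.ofReal (Mx x t) ∂μ01)
            ≤ ∫⁻ t, Filter.liminf (fun n => ENNReal.ofReal (Mx (u n) t)) Filter.atTop ∂μ01 :=
              lintegral_mono_ae claim1
          _ ≤ Filter.liminf (fun n => ∫⁻ t, ENNReal.ofReal (Mx (u n) t) ∂μ01) Filter.atTop :=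
              lintegral_liminf_le' fun n => (hMxInt (u n)).aemeasurable.ennreal_ofReal
          _ ≤ ENNReal.ofReal y := by
              refine Filter.liminf_le_of_frequently_le' ?_
              exact Filter.Frequently.of_forall claim2
      rw [hx1]
      calc (∫⁻ t, ENNReal.ofReal (Mx x t) ∂μ01).toReal
          ≤ (ENNReal.ofReal y).toReal :=
            ENNReal.toReal_mono ENNReal.ofReal_ne_top hchain
        _ = y := ENNReal.toReal_ofReal hy0
    exact absurd hfinal (not_le.mpr hy)
  -- R is continuous, hence bounded
  set P : Seminorm ℝ X := Seminorm.of R hRadd hRsmul with hP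
  have hPcont : Continuous P := P.continuous_of_lowerSemicontinuous hRlsc
  obtain ⟨c, hc0, hc⟩ := P.bound_of_continuous_normedSpace hPcont
  have hRbound : ∀ x : X, R x ≤ c * ‖x‖ := fun x => hc x
  -- the sublinear functional φ
  set φ : X → ℝ := fun x => ∫ t in A, suppFD x (Γ t) with hφ
  have hφrepr : ∀ x : X, φ x = ∫ t in A, suppFD x (Γ t) ∂μ01 := by
    intro x
    rw [hφ]
    simp only
    rw [hμA]
  have aeA : ∀ (p : ℝ → Prop), (∀ᵐ t ∂μ01, p t) → (∀ᵐ t ∂(μ01.restrict A), p t) :=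
    fun p hp => ae_restrict_of_ae hp
  have hφR : ∀ x : X, φ x ≤ R x := by
    intro x
    rw [hφrepr]
    calc (∫ t in A, suppFD x (Γ t) ∂μ01) ≤ ∫ t in A, Mx x t ∂μ01 := by
          refine integral_mono_ae ((hInt x).restrict) ((hMxInt x).restrict) ?_
          exact aeA _ (Filter.Eventually.of_forall fun t => le_max_left _ _)
      _ ≤ ∫ t, Mx x t ∂μ01 := setIntegral_le_integral (hMxInt x) (hMxnn x)
      _ = R x := rfl
  have hφbound : ∀ x : X, φ x ≤ c * ‖x‖ := fun x => (hφR x).trans (hRbound x)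
  have hφadd : ∀ x y : X, φ (x + y) ≤ φ x + φ y := by
    intro x y
    rw [hφrepr, hφrepr, hφrepr]
    have hle : (fun t => suppFD (x + y) (Γ t)) ≤ᵐ[μ01.restrict A]
        fun t => suppFD x (Γ t) + suppFD y (Γ t) := by
      refine aeA _ ?_
      filter_upwards [hne, hBdd x, hBdd y] with t h1 h2 h3
      exact suppFD_add_le h1 h2 h3
    calc (∫ t in A, suppFD (x + y) (Γ t) ∂μ01)
        ≤ ∫ t in A, (suppFD x (Γ t) + suppFD y (Γ t)) ∂μ01 :=
          integral_mono_ae ((hInt (x + y)).restrict) (((hInt x).restrict).add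
            ((hInt y).restrict)) hle
      _ = (∫ t in A, suppFD x (Γ t) ∂μ01) + ∫ t in A, suppFD y (Γ t) ∂μ01 :=
          integral_add ((hInt x).restrict) ((hInt y).restrict)
  have hφsmul : ∀ (r : ℝ), 0 ≤ r → ∀ x : X, φ (r • x) = r * φ x := by
    intro r hr x
    rw [hφrepr, hφrepr]
    have hle : (fun t => suppFD (r • x) (Γ t)) =ᵐ[μ01.restrict A]
        fun t => r * suppFD x (Γ t) := by
      refine aeA _ ?_
      filter_upwards [hne, hBdd x] with t h1 h2
      exact suppFD_smul h1 hr h2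
    rw [integral_congr_ae hle, integral_const_mul]
  have hφzero : φ 0 = 0 := by
    have := hφsmul 0 le_rfl 0
    simpa using this
  have hφpair : ∀ x : X, 0 ≤ φ x + φ (-x) := by
    intro x
    rw [hφrepr, hφrepr, ← integral_add ((hInt x).restrict) ((hInt (-x)).restrict)]
    refine integral_nonneg_of_ae (aeA _ ?_)
    filter_upwards [hne, hBdd x, hBdd (-x)] with t h1 h2 h3
    exact suppFD_pair_nonneg h1 h2 h3
  -- the key Hahn-Banach step
  have key : ∀ x₀ : X, ∃ g : StrongDual ℝ X, (∀ x, g x ≤ φ x) ∧ g x₀ = φ x₀ := by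
    intro x₀
    have Nhom : ∀ (r : ℝ), 0 < r → ∀ x : X, φ (r • x) = r * φ x :=
      fun r hr x => hφsmul r hr.le x
    have mk_cont : ∀ g : X →ₗ[ℝ] ℝ, (∀ x, g x ≤ φ x) →
        ∃ G : StrongDual ℝ X, ∀ x, G x = g x := by
      intro g hg
      have hb : ∀ x : X, ‖g x‖ ≤ c * ‖x‖ := by
        intro x
        rw [Real.norm_eq_abs, abs_le]
        constructor
        · have h1 : g (-x) ≤ φ (-x) := hg (-x)
          have h2 : φ (-x) ≤ c * ‖x‖ := by
            have := hφbound (-x); rwa [norm_neg] at this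
          simp only [_root_.map_neg] at h1
          linarith
        · exact (hg x).trans (hφbound x)
      exact ⟨LinearMap.mkContinuous g c hb, fun x => rfl⟩
    rcases eq_or_ne x₀ 0 with rfl | hx₀
    · -- use trivial domain
      obtain ⟨g, -, hg2⟩ := exists_extension_of_le_sublinear ⟨⊥, 0⟩ φ Nhom hφadd
        (fun x => by
          obtain ⟨v, hv⟩ := x
          simp only [Submodule.mem_bot] at hv
          subst hv
          simp [hφzero])
      obtain ⟨G, hG⟩ := mk_cont g hg2
      refine ⟨G, fun x => (hG x).le.trans (hg2 x), ?_⟩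
      rw [hG, _root_.map_zero, hφzero]
    · obtain ⟨g, hg1, hg2⟩ := exists_extension_of_le_sublinear
        (LinearPMap.mkSpanSingleton x₀ (φ x₀) hx₀) φ Nhom hφadd
        (fun x => by
          obtain ⟨v, hv⟩ := x
          obtain ⟨r, rfl⟩ := Submodule.mem_span_singleton.mp hv
          rw [LinearPMap.mkSpanSingleton'_apply]
          simp only [smul_eq_mul, RingHom.id_apply]
          rcases le_or_gt 0 r with hr | hr
          · rw [hφsmul r hr x₀]
          · have h1 : r • x₀ = (-r) • (-x₀) := by rw [neg_smul, smul_neg, neg_neg]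
            rw [h1, hφsmul (-r) (by linarith) (-x₀)]
            have := hφpair x₀
            nlinarith)
      obtain ⟨G, hG⟩ := mk_cont g hg2
      refine ⟨G, fun x => (hG x).le.trans (hg2 x), ?_⟩
      rw [hG]
      have := hg1 ⟨x₀, Submodule.mem_span_singleton_self x₀⟩
      rw [this, LinearPMap.mkSpanSingleton_apply]
  -- the set M
  refine ⟨{x' : StrongDual ℝ X | ∀ x : X, x' x ≤ φ x}, ?_, ?_, ?_, ?_⟩
  · obtain ⟨g, hg, -⟩ := key 0
    exact ⟨g, hg⟩
  · intro f hf g hg a b ha hb hab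
    intro x
    have h1 : f x ≤ φ x := hf x
    have h2 : g x ≤ φ x := hg x
    have : (a • f + b • g) x = a * f x + b * g x := by
      simp [ContinuousLinearMap.add_apply, ContinuousLinearMap.smul_apply]
    rw [this]
    calc a * f x + b * g x ≤ a * φ x + b * φ x := by
          exact add_le_add (mul_le_mul_of_nonneg_left h1 ha)
            (mul_le_mul_of_nonneg_left h2 hb)
      _ = φ x := by rw [← add_mul, hab, one_mul]
  · -- compactness
    have hsubball : {x' : StrongDual ℝ X | ∀ x : X, x' x ≤ φ x} ⊆
        Metric.closedBall 0 c := by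
      intro x' hx'
      rw [Metric.mem_closedBall, dist_zero_right]
      refine ContinuousLinearMap.opNorm_le_bound x' hc0.le fun x => ?_
      rw [Real.norm_eq_abs, abs_le]
      constructor
      · have h1 : x' (-x) ≤ φ (-x) := hx' (-x)
        have h2 : φ (-x) ≤ c * ‖x‖ := by
          have := hφbound (-x); rwa [norm_neg] at this
        simp only [_root_.map_neg] at h1
        linarith
      · exact (hx' x).trans (hφbound x)
    have hcompact : IsCompact (WeakDual.toStrongDual ⁻¹'
        Metric.closedBall (0 : StrongDual ℝ X) c) :=
      WeakDual.isCompact_closedBall (0 : StrongDual ℝ X) c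
    refine IsCompact.of_isClosed_subset hcompact ?_ ?_
    · have heq : StrongDual.toWeakDual ''
          {x' : StrongDual ℝ X | ∀ x : X, x' x ≤ φ x}
          = ⋂ x : X, {w : WeakDual ℝ X | w x ≤ φ x} := by
        ext w
        simp only [mem_image, mem_iInter, mem_setOf_eq]
        constructor
        · rintro ⟨x', hx', rfl⟩ x
          exact hx' x
        · intro hw
          exact ⟨WeakDual.toStrongDual w, fun x => hw x, rfl⟩
      rw [heq]
      exact isClosed_iInter fun x =>
        IsClosed.preimage (WeakDual.eval_continuous x) isClosed_Iic
    · rintro _ ⟨x', hx', rfl⟩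
      exact hsubball hx'
  · -- support function equality
    intro x
    obtain ⟨g, hg1, hg2⟩ := key x
    have hfx : φ x = ∫ t in A, suppFD x (Γ t) := rfl
    rw [← hfx]
    refine le_antisymm ?_ ?_
    · exact suppFD_le ⟨g, hg1⟩ fun x' hx' => hx' x
    · rw [← hg2]
      exact le_suppFD ⟨φ x, by rintro _ ⟨x', hx', rfl⟩; exact hx' x⟩ hg1


end
end

section
/- Every scalarly integrable multifunction Γ : [0,1] → c(X) is Dunford integrable in cw*k(X**): for every A ∈ 𝓛 there exists M(A) ∈ cw*k(X**) such that s(x*, M(A)) = ∫_A s(x*, Γ(t)) dλ(t) for every x* ∈ X*. -/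
open MeasureTheory Set

noncomputable section

/-- The support function `s(x*, C) = sup {x*(x) : x ∈ C}`. -/
def suppF {X : Type*} [NormedAddCommGroup X] [NormedSpace ℝ X]
    (x' : StrongDual ℝ X) (C : Set X) : ℝ :=
  sSup (x' '' C)

/-- The support function of a subset of the bidual `X**`, evaluated at `x* ∈ X*`:
`s(x*, C) = sup {x**(x*) : x** ∈ C}`. -/
def suppFBidual {X : Type*} [NormedAddCommGroup X] [NormedSpace ℝ X]
    (x' : StrongDual ℝ X)
    (C : Set (StrongDual ℝ (StrongDual ℝ X))) : ℝ :=
  sSup ((fun x'' : StrongDual ℝ (StrongDual ℝ X) => x'' x') '' C)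

section AuxSupp

variable {X : Type*} [NormedAddCommGroup X] [NormedSpace ℝ X]
  {C : Set X} {x' y' : StrongDual ℝ X}

lemma apply_le_suppF (h : BddAbove (x' '' C)) {x : X} (hx : x ∈ C) :
    x' x ≤ suppF x' C :=
  le_csSup h ⟨x, hx, rfl⟩

lemma suppF_add_le (hne : C.Nonempty) (h1 : BddAbove (x' '' C))
    (h2 : BddAbove (y' '' C)) :
    suppF (x' + y') C ≤ suppF x' C + suppF y' C := by
  refine csSup_le (hne.image _) ?_
  rintro a ⟨x, hx, rfl⟩
  have : (x' + y') x = x' x + y' x := rfl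
  rw [this]
  exact add_le_add (apply_le_suppF h1 hx) (apply_le_suppF h2 hx)

lemma suppF_smul {c : ℝ} (hc : 0 < c) (hne : C.Nonempty)
    (h1 : BddAbove (x' '' C)) :
    suppF (c • x') C = c * suppF x' C := by
  have himg : (c • x') '' C = (fun a => c * a) '' (x' '' C) := by
    ext a
    constructor
    · rintro ⟨x, hx, rfl⟩; exact ⟨x' x, ⟨x, hx, rfl⟩, rfl⟩
    · rintro ⟨b, ⟨x, hx, rfl⟩, rfl⟩; exact ⟨x, hx, rfl⟩
  have hS : (x' '' C).Nonempty := hne.image _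
  have hbdd : BddAbove ((fun a => c * a) '' (x' '' C)) := by
    obtain ⟨b, hb⟩ := h1
    refine ⟨c * b, ?_⟩
    rintro a ⟨d, hd, rfl⟩
    exact mul_le_mul_of_nonneg_left (hb hd) hc.le
  rw [suppF, suppF, himg]
  apply le_antisymm
  · refine csSup_le (hS.image _) ?_
    rintro a ⟨d, hd, rfl⟩
    exact mul_le_mul_of_nonneg_left (le_csSup h1 hd) hc.le
  · have : sSup (x' '' C) ≤ sSup ((fun a => c * a) '' (x' '' C)) / c := by
      refine csSup_le hS fun d hd => ?_
      rw [le_div_iff₀ hc, mul_comm]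
      exact le_csSup hbdd ⟨d, hd, rfl⟩
    calc c * sSup (x' '' C) ≤ c * (sSup ((fun a => c * a) '' (x' '' C)) / c) :=
          mul_le_mul_of_nonneg_left this hc.le
      _ = sSup ((fun a => c * a) '' (x' '' C)) := by field_simp

lemma suppF_width_nonneg (hne : C.Nonempty) (h1 : BddAbove (x' '' C))
    (h2 : BddAbove ((-x') '' C)) :
    0 ≤ suppF x' C + suppF (-x') C := by
  obtain ⟨x, hx⟩ := hne
  have hA := apply_le_suppF h1 hx
  have hB := apply_le_suppF h2 hx
  have : (-x') x = -(x' x) := rfl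
  rw [this] at hB
  linarith

lemma suppF_zero (hne : C.Nonempty) : suppF (0 : StrongDual ℝ X) C = 0 := by
  have : (0 : StrongDual ℝ X) '' C = {0} := by
    apply Subset.antisymm
    · rintro a ⟨x, hx, rfl⟩; rfl
    · rintro a rfl; exact ⟨hne.choose, hne.choose_spec, rfl⟩
  rw [suppF, this, csSup_singleton]

end AuxSupp

open ENNReal in
set_option maxHeartbeats 2000000 in
set_option synthInstance.maxHeartbeats 400000 in
/-- Every scalarly integrable multifunction `Γ : [0,1] → c(X)` is
Dunford integrable in `cw*k(X**)`: for every Lebesgue measurable `A ⊆ [0,1]` there is a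
nonempty convex σ(X**,X*)-compact set `M ⊆ X**` with
`s(x*, M) = ∫_A s(x*, Γ(t)) dλ(t)` for every `x* ∈ X*`. -/
theorem dunford_integrable_of_scalarly_integrable
    {X : Type*} [NormedAddCommGroup X] [NormedSpace ℝ X] [CompleteSpace X]
    (Γ : ℝ → Set X)
    (hΓ : ∀ t ∈ Icc (0:ℝ) 1, (Γ t).Nonempty ∧ IsClosed (Γ t) ∧ Convex ℝ (Γ t))
    (hscal : ∀ x' : StrongDual ℝ X,
      (∀ᵐ t ∂μ01, BddAbove (x' '' Γ t)) ∧
      Integrable (fun t => suppF x' (Γ t)) μ01) :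
    ∀ A : Set ℝ, A ⊆ Icc (0:ℝ) 1 → MeasurableSet A →
      ∃ M : Set (StrongDual ℝ (StrongDual ℝ X)), M.Nonempty ∧ Convex ℝ M ∧
        IsCompact (StrongDual.toWeakDual '' M) ∧
        ∀ x' : StrongDual ℝ X, suppFBidual x' M = ∫ t in A, suppF x' (Γ t) := by
  intro A hA hAm
  have hμ : μ01 = volume.restrict (Icc (0:ℝ) 1) := rfl
  have hmem : ∀ᵐ t ∂μ01, t ∈ Icc (0:ℝ) 1 := by
    rw [hμ]; exact ae_restrict_mem measurableSet_Icc
  have hne : ∀ᵐ t ∂μ01, (Γ t).Nonempty := hmem.mono fun t ht => (hΓ t ht).1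
  have hμA : volume.restrict A = μ01.restrict A := by
    rw [hμ, Measure.restrict_restrict hAm, inter_eq_self_of_subset_left hA]
  have haeA : ∀ {p : ℝ → Prop}, (∀ᵐ t ∂μ01, p t) → (∀ᵐ t ∂(volume.restrict A), p t) := by
    intro p hp
    rw [hμA]
    exact ae_restrict_of_ae hp
  have hintA : ∀ x' : StrongDual ℝ X,
      Integrable (fun t => suppF x' (Γ t)) (volume.restrict A) := by
    intro x'
    rw [hμA]
    exact (hscal x').2.restrict
  set φ : StrongDual ℝ X → ℝ := fun x' => ∫ t in A, suppF x' (Γ t) with hφdef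
  have hφ0 : φ 0 = 0 := by
    have h0 : ∀ᵐ t ∂(volume.restrict A),
        suppF (0 : StrongDual ℝ X) (Γ t) = (0:ℝ) :=
      haeA (hne.mono fun t ht => suppF_zero ht)
    simp only [hφdef]
    rw [integral_congr_ae h0, integral_zero]
  have hφ_add : ∀ x' y', φ (x' + y') ≤ φ x' + φ y' := by
    intro x' y'
    have hae : ∀ᵐ t ∂(volume.restrict A),
        suppF (x' + y') (Γ t) ≤ suppF x' (Γ t) + suppF y' (Γ t) :=
      haeA ((hne.and ((hscal x').1.and (hscal y').1)).mono
        fun t ht => suppF_add_le ht.1 ht.2.1 ht.2.2)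
    calc φ (x' + y') ≤ ∫ t in A, (suppF x' (Γ t) + suppF y' (Γ t)) :=
          integral_mono_ae (hintA _) ((hintA x').add (hintA y')) hae
      _ = φ x' + φ y' := integral_add (hintA x') (hintA y')
  have hφ_smul : ∀ c : ℝ, 0 < c → ∀ x', φ (c • x') = c * φ x' := by
    intro c hc x'
    have hae : ∀ᵐ t ∂(volume.restrict A),
        suppF (c • x') (Γ t) = c * suppF x' (Γ t) :=
      haeA ((hne.and (hscal x').1).mono fun t ht => suppF_smul hc ht.1 ht.2)
    simp only [hφdef]
    rw [integral_congr_ae hae, integral_const_mul]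
  have hφ_width : ∀ x', 0 ≤ φ x' + φ (-x') := by
    intro x'
    have hae : ∀ᵐ t ∂(volume.restrict A),
        0 ≤ suppF x' (Γ t) + suppF (-x') (Γ t) :=
      haeA ((hne.and ((hscal x').1.and (hscal (-x')).1)).mono
        fun t ht => suppF_width_nonneg ht.1 ht.2.1 ht.2.2)
    have h := integral_nonneg_of_ae hae
    rw [integral_add (hintA x') (hintA (-x'))] at h
    exact h
  set Q : StrongDual ℝ X → ℝ≥0∞ :=
      fun x' => ∫⁻ t, ENNReal.ofReal (suppF x' (Γ t)) ∂μ01 with hQdef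
  have hQmeas : ∀ x', AEMeasurable (fun t => ENNReal.ofReal (suppF x' (Γ t))) μ01 :=
    fun x' => ENNReal.measurable_ofReal.comp_aemeasurable
      (hscal x').2.aestronglyMeasurable.aemeasurable
  have hQfin : ∀ x', Q x' < ⊤ := by
    intro x'
    have h1 : Q x' ≤ ∫⁻ t, ‖suppF x' (Γ t)‖₊ ∂μ01 :=
      lintegral_mono fun t => Real.ofReal_le_enorm _
    exact lt_of_le_of_lt h1 (hscal x').2.hasFiniteIntegral
  have hQ_subadd : ∀ a b, Q (a + b) ≤ Q a + Q b := by
    intro a b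
    have hae : ∀ᵐ t ∂μ01, ENNReal.ofReal (suppF (a + b) (Γ t)) ≤
        ENNReal.ofReal (suppF a (Γ t)) + ENNReal.ofReal (suppF b (Γ t)) :=
      (hne.and ((hscal a).1.and (hscal b).1)).mono fun t ht =>
        le_trans (ENNReal.ofReal_le_ofReal (suppF_add_le ht.1 ht.2.1 ht.2.2))
          ENNReal.ofReal_add_le
    calc Q (a + b)
        ≤ ∫⁻ t, (ENNReal.ofReal (suppF a (Γ t)) + ENNReal.ofReal (suppF b (Γ t))) ∂μ01 :=
          lintegral_mono_ae hae
      _ = Q a + Q b := lintegral_add_left' (hQmeas a) _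
  have hQ_lsc : ∀ (u : ℕ → StrongDual ℝ X) (x' : StrongDual ℝ X),
      Filter.Tendsto u Filter.atTop (nhds x') →
      Q x' ≤ Filter.liminf (fun k => Q (u k)) Filter.atTop := by
    intro u x' hu
    have hae : ∀ᵐ t ∂μ01, ENNReal.ofReal (suppF x' (Γ t)) ≤
        Filter.liminf (fun k => ENNReal.ofReal (suppF (u k) (Γ t))) Filter.atTop := by
      have hall : ∀ᵐ t ∂μ01, (Γ t).Nonempty ∧ BddAbove (x' '' Γ t) ∧
          ∀ k, BddAbove ((u k) '' Γ t) :=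
        hne.and ((hscal x').1.and (ae_all_iff.2 fun k => (hscal (u k)).1))
      refine hall.mono fun t ht => ?_
      obtain ⟨h0, h1, h2⟩ := ht
      have himg : (x' '' Γ t).Nonempty := h0.image _
      have hmap : ENNReal.ofReal (suppF x' (Γ t)) =
          sSup (ENNReal.ofReal '' (x' '' Γ t)) :=
        Monotone.map_csSup_of_continuousAt ENNReal.continuous_ofReal.continuousAt
          (fun a b hab => ENNReal.ofReal_le_ofReal hab) himg h1
      rw [hmap]
      refine sSup_le ?_
      rintro e ⟨a, ⟨x, hx, rfl⟩, rfl⟩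
      have hptw : ∀ k, ENNReal.ofReal ((u k) x) ≤ ENNReal.ofReal (suppF (u k) (Γ t)) :=
        fun k => ENNReal.ofReal_le_ofReal (apply_le_suppF (h2 k) hx)
      have hcont : Continuous fun g : StrongDual ℝ X => g x :=
        (ContinuousLinearMap.apply ℝ ℝ x).continuous
      have hconv : Filter.Tendsto (fun k => (u k) x) Filter.atTop (nhds (x' x)) :=
        (hcont.tendsto x').comp hu
      have hconv' : Filter.Tendsto (fun k => ENNReal.ofReal ((u k) x)) Filter.atTop
          (nhds (ENNReal.ofReal (x' x))) :=
        (ENNReal.continuous_ofReal.tendsto _).comp hconv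
      calc ENNReal.ofReal (x' x)
          = Filter.liminf (fun k => ENNReal.ofReal ((u k) x)) Filter.atTop :=
            hconv'.liminf_eq.symm
        _ ≤ _ := Filter.liminf_le_liminf (Filter.Eventually.of_forall hptw)
    calc Q x'
        ≤ ∫⁻ t, Filter.liminf (fun k => ENNReal.ofReal (suppF (u k) (Γ t)))
            Filter.atTop ∂μ01 := lintegral_mono_ae hae
      _ ≤ Filter.liminf (fun k => Q (u k)) Filter.atTop :=
          lintegral_liminf_le' fun k => hQmeas (u k)
  set S : ℕ → Set (StrongDual ℝ X) :=
      fun n => {x' | Q x' ≤ (n : ℝ≥0∞) ∧ Q (-x') ≤ (n : ℝ≥0∞)} with hSdef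
  have hSclosed : ∀ n, IsClosed (S n) := by
    intro n
    apply IsSeqClosed.isClosed
    intro u p hu hup
    constructor
    · refine le_trans (hQ_lsc u p hup) (le_trans
        (Filter.liminf_le_liminf (Filter.Eventually.of_forall fun k => (hu k).1)) ?_)
      exact le_of_eq (Filter.liminf_const _)
    · refine le_trans (hQ_lsc (fun k => -(u k)) (-p) hup.neg) (le_trans
        (Filter.liminf_le_liminf (Filter.Eventually.of_forall fun k => (hu k).2)) ?_)
      exact le_of_eq (Filter.liminf_const _)
  have hScover : ⋃ n, S n = univ := by
    refine eq_univ_of_forall fun x' => ?_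
    obtain ⟨n, hn⟩ := ENNReal.exists_nat_gt (max_lt (hQfin x') (hQfin (-x'))).ne
    exact mem_iUnion.2 ⟨n, le_trans (le_max_left _ _) hn.le,
      le_trans (le_max_right _ _) hn.le⟩
  obtain ⟨N, hN⟩ := nonempty_interior_of_iUnion_of_closed hSclosed hScover
  obtain ⟨x0, hx0⟩ := hN
  rw [mem_interior_iff_mem_nhds, Metric.mem_nhds_iff] at hx0
  obtain ⟨r, hr, hball⟩ := hx0
  set K : ℝ≥0∞ := max (Q x0) (Q (-x0)) with hKdef
  have hKfin : K < ⊤ := max_lt (hQfin x0) (hQfin (-x0))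
  have hNK : ((N : ℝ≥0∞) + K) ≠ ⊤ :=
    ENNReal.add_ne_top.2 ⟨ENNReal.natCast_ne_top N, hKfin.ne⟩
  have hQball : ∀ u : StrongDual ℝ X, ‖u‖ < r →
      Q u ≤ (N : ℝ≥0∞) + K ∧ Q (-u) ≤ (N : ℝ≥0∞) + K := by
    intro u hu
    have hmemb : x0 + u ∈ S N := hball (by
      rw [Metric.mem_ball, dist_eq_norm]
      simpa using hu)
    constructor
    · have h1 : u = (x0 + u) + (-x0) := by abel
      calc Q u = Q ((x0 + u) + (-x0)) := by rw [← h1]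
        _ ≤ Q (x0 + u) + Q (-x0) := hQ_subadd _ _
        _ ≤ (N : ℝ≥0∞) + K := add_le_add hmemb.1 (le_max_right _ _)
    · have h1 : -u = (-(x0 + u)) + x0 := by abel
      calc Q (-u) = Q ((-(x0 + u)) + x0) := by rw [← h1]
        _ ≤ Q (-(x0 + u)) + Q x0 := hQ_subadd _ _
        _ ≤ (N : ℝ≥0∞) + K := add_le_add hmemb.2 (le_max_left _ _)
  have hposint : ∀ u : StrongDual ℝ X,
      Integrable (fun t => max (suppF u (Γ t)) 0) μ01 := fun u => (hscal u).2.pos_part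
  have hposintA : ∀ u : StrongDual ℝ X,
      Integrable (fun t => max (suppF u (Γ t)) 0) (volume.restrict A) := by
    intro u
    rw [hμA]
    exact (hposint u).restrict
  have hApos : ∀ u : StrongDual ℝ X,
      ∫ t in A, max (suppF u (Γ t)) 0 ≤ (Q u).toReal := by
    intro u
    have h2 : ∫ t in A, max (suppF u (Γ t)) 0 ≤
        ∫ t in Icc (0:ℝ) 1, max (suppF u (Γ t)) 0 := by
      refine setIntegral_mono_set ?_
        (Filter.Eventually.of_forall fun t => le_max_right _ _)
        (HasSubset.Subset.eventuallyLE hA)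
      have h := hposint u
      rw [hμ] at h
      exact h
    have h3 : ∫ t in Icc (0:ℝ) 1, max (suppF u (Γ t)) 0 =
        (∫⁻ t, ENNReal.ofReal (max (suppF u (Γ t)) 0) ∂μ01).toReal := by
      rw [← hμ]
      exact integral_eq_lintegral_of_nonneg_ae
        (Filter.Eventually.of_forall fun t => le_max_right _ _)
        (hposint u).aestronglyMeasurable
    have h4 : (∫⁻ t, ENNReal.ofReal (max (suppF u (Γ t)) 0) ∂μ01) = Q u := by
      refine lintegral_congr fun t => ?_
      rcases le_total (suppF u (Γ t)) 0 with h | h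
      · rw [max_eq_right h, ENNReal.ofReal_of_nonpos h, ENNReal.ofReal_zero]
      · rw [max_eq_left h]
    rw [h3, h4] at h2
    exact h2
  have hφ_le : ∀ u, φ u ≤ (Q u).toReal := by
    intro u
    refine le_trans ?_ (hApos u)
    exact integral_mono_ae (hintA u) (hposintA u)
      (Filter.Eventually.of_forall fun t => le_max_left _ _)
  have hφ_ge : ∀ u, -(Q (-u)).toReal ≤ φ u := by
    intro u
    have hmono : ∫ t in A, (-(max (suppF (-u) (Γ t)) 0)) ≤ φ u := by
      refine integral_mono_ae (hposintA (-u)).neg (hintA u) ?_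
      refine haeA ((hne.and ((hscal u).1.and (hscal (-u)).1)).mono fun t ht => ?_)
      have hw := suppF_width_nonneg ht.1 ht.2.1 ht.2.2
      have hm := le_max_left (suppF (-u) (Γ t)) 0
      simp only [Pi.neg_apply]
      linarith
    rw [integral_neg] at hmono
    linarith [hApos (-u)]
  have hφball : ∀ u : StrongDual ℝ X, ‖u‖ < r →
      |φ u| ≤ ((N:ℝ≥0∞) + K).toReal := by
    intro u hu
    rw [abs_le]
    constructor
    · exact le_trans (neg_le_neg (ENNReal.toReal_mono hNK (hQball u hu).2)) (hφ_ge u)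
    · exact le_trans (hφ_le u) (ENNReal.toReal_mono hNK (hQball u hu).1)
  set Cb : ℝ := 2 * ((N:ℝ≥0∞) + K).toReal / r with hCbdef
  have hCb0 : 0 ≤ Cb := by positivity
  have hφC : ∀ x', |φ x'| ≤ Cb * ‖x'‖ := by
    intro x'
    rcases eq_or_ne x' 0 with rfl | hx
    · simp [hφ0]
    · have hxn : 0 < ‖x'‖ := norm_pos_iff.2 hx
      set c : ℝ := r / (2 * ‖x'‖) with hcdef
      have hc : 0 < c := by positivity
      have hcx : c * ‖x'‖ = r / 2 := by
        rw [hcdef]; field_simp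
      have hnorm : ‖c • x'‖ < r := by
        rw [norm_smul, Real.norm_eq_abs, abs_of_pos hc, hcx]
        linarith
      have h5 := hφball (c • x') hnorm
      rw [hφ_smul c hc x', abs_mul, abs_of_pos hc] at h5
      have h6 : |φ x'| ≤ ((N:ℝ≥0∞) + K).toReal / c := by
        rw [le_div_iff₀ hc]
        linarith
      have h7 : ((N:ℝ≥0∞) + K).toReal / c = Cb * ‖x'‖ := by
        rw [hCbdef, hcdef]
        field_simp
      linarith
  have hφ_le_C : ∀ z, φ z ≤ Cb * ‖z‖ := fun z => (abs_le.1 (hφC z)).2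
  have key : ∀ x'0 : StrongDual ℝ X,
      ∃ G : StrongDual ℝ (StrongDual ℝ X),
        (∀ z, G z ≤ φ z) ∧ G x'0 = φ x'0 := by
    have hdom : ∀ y : StrongDual ℝ X, y ≠ 0 →
        ∃ G : StrongDual ℝ (StrongDual ℝ X),
          (∀ z, G z ≤ φ z) ∧ G y = φ y := by
      intro y hy
      set f := LinearPMap.mkSpanSingleton (K := ℝ) (L := ℝ) (σ := RingHom.id ℝ) y (φ y) hy with hfdef
      have hf : ∀ z : f.domain, f z ≤ φ z := by
        rintro ⟨z, hz⟩
        obtain ⟨c, rfl⟩ := Submodule.mem_span_singleton.1 hz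
        have happ : f ⟨c • y, hz⟩ = c • (φ y) :=
          LinearPMap.mkSpanSingleton'_apply y (φ y) _ c hz
        rw [happ]
        rcases lt_trichotomy c 0 with hcn | rfl | hcp
        · have hrw : c • y = (-c) • (-y) := by simp
          have h1 : φ (c • y) = (-c) * φ (-y) := by
            rw [hrw, hφ_smul (-c) (by linarith) (-y)]
          have h2 : -φ y ≤ φ (-y) := by linarith [hφ_width y]
          have h3 := mul_le_mul_of_nonneg_left h2 (by linarith : (0:ℝ) ≤ -c)
          rw [smul_eq_mul, h1]
          nlinarith
        · simp [hφ0]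
        · rw [smul_eq_mul, hφ_smul c hcp y]
      obtain ⟨g, hg1, hg2⟩ := exists_extension_of_le_sublinear f φ hφ_smul hφ_add hf
      have hy_mem : y ∈ f.domain := Submodule.mem_span_singleton_self y
      have hgy : g y = φ y := by
        have happ2 : f ⟨y, hy_mem⟩ = φ y :=
          LinearPMap.mkSpanSingleton'_apply_self y (φ y) _ hy_mem
        have h := hg1 ⟨y, hy_mem⟩
        rw [happ2] at h
        exact h
      have hbound : ∀ z, ‖g z‖ ≤ Cb * ‖z‖ := by
        intro z
        rw [Real.norm_eq_abs, abs_le]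
        constructor
        · have h1 : g (-z) ≤ φ (-z) := hg2 (-z)
          have h2 : φ (-z) ≤ Cb * ‖z‖ := by
            have := hφ_le_C (-z)
            rwa [norm_neg] at this
          have h3 : g (-z) = -g z := map_neg g z
          linarith
        · exact le_trans (hg2 z) (hφ_le_C z)
      refine ⟨LinearMap.mkContinuous g Cb hbound, fun z => ?_, ?_⟩
      · simpa [LinearMap.mkContinuous_apply] using hg2 z
      · simpa [LinearMap.mkContinuous_apply] using hgy
    intro x'0
    rcases eq_or_ne x'0 0 with rfl | hx0ne
    · by_cases htriv : ∀ z : StrongDual ℝ X, z = 0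
      · refine ⟨0, fun z => ?_, by simp [hφ0]⟩
        rw [htriv z, hφ0]
        simp
      · push_neg at htriv
        obtain ⟨y, hy⟩ := htriv
        obtain ⟨G, hG, -⟩ := hdom y hy
        exact ⟨G, hG, by simp [hφ0]⟩
    · exact hdom x'0 hx0ne
  set M : Set (StrongDual ℝ (StrongDual ℝ X)) :=
      {G | ∀ z, G z ≤ φ z} with hMdef
  obtain ⟨G0, hG0, -⟩ := key 0
  have hMbdd : ∀ G ∈ M, ‖G‖ ≤ Cb := by
    intro G hG
    refine ContinuousLinearMap.opNorm_le_bound _ hCb0 fun z => ?_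
    rw [Real.norm_eq_abs, abs_le]
    refine ⟨?_, le_trans (hG z) (hφ_le_C z)⟩
    have h1 := hG (-z)
    have h2 : φ (-z) ≤ Cb * ‖z‖ := by
      have := hφ_le_C (-z)
      rwa [norm_neg] at this
    have h3 : G (-z) = -(G z) := map_neg G z
    linarith
  refine ⟨M, ⟨G0, hG0⟩, ?_, ?_, ?_⟩
  · intro G1 hG1 G2 hG2 a b ha hb hab
    intro z
    have h1 : (a • G1 + b • G2) z = a * G1 z + b * G2 z := by
      simp [ContinuousLinearMap.add_apply, ContinuousLinearMap.smul_apply, smul_eq_mul]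
    have h2 : a * G1 z ≤ a * φ z := mul_le_mul_of_nonneg_left (hG1 z) ha
    have h3 : b * G2 z ≤ b * φ z := mul_le_mul_of_nonneg_left (hG2 z) hb
    have h4 : a * φ z + b * φ z = φ z := by
      rw [← add_mul, hab, one_mul]
    rw [h1]
    linarith
  · have hset : StrongDual.toWeakDual '' M =
        ⋂ z : StrongDual ℝ X,
          {w : WeakDual ℝ (StrongDual ℝ X) | w z ≤ φ z} := by
      ext w
      simp only [mem_iInter, mem_setOf_eq]
      constructor
      · rintro ⟨G, hG, rfl⟩ z
        exact hG z
      · intro hw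
        exact ⟨WeakDual.toStrongDual w, fun z => hw z, rfl⟩
    apply WeakDual.isCompact_of_bounded_of_closed
    · rw [show (StrongDual.toWeakDual '' M : Set (WeakDual ℝ (StrongDual ℝ X))) = M from Set.image_id' M]
      exact (Metric.isBounded_closedBall (x := (0 : StrongDual ℝ
        (StrongDual ℝ X))) (r := Cb)).subset
        fun (G : StrongDual ℝ (StrongDual ℝ X)) hG => by rw [Metric.mem_closedBall]; exact (dist_zero_right G).trans_le (hMbdd G hG)
    · rw [hset]
      exact isClosed_iInter fun z =>
        IsClosed.preimage (WeakDual.eval_continuous z) isClosed_Iic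
  · intro x'
    obtain ⟨G, hG, hGx⟩ := key x'
    have hφx : φ x' = ∫ t in A, suppF x' (Γ t) := by rw [hφdef]
    rw [← hφx]
    have hub : ∀ a ∈ (fun G : StrongDual ℝ (StrongDual ℝ X) => G x') '' M,
        a ≤ φ x' := by
      rintro a ⟨H, hH, rfl⟩
      exact hH x'
    have hbdd : BddAbove ((fun G : StrongDual ℝ (StrongDual ℝ X) => G x') '' M) :=
      ⟨φ x', hub⟩
    simp only [suppFBidual]
    apply le_antisymm
    · exact csSup_le ⟨G x', ⟨G, hG, rfl⟩⟩ hub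
    · calc φ x' = G x' := hGx.symm
        _ ≤ _ := le_csSup hbdd ⟨G, hG, rfl⟩


end
end
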